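/- Let F = (X_1, …, X_n) with X_i ∈ ℝ^{d×d_i} be a matrix frame, and for t ∈ ℝ^n set Q(t) = ∑_{i=1}^n e^{t_i} X_i·X_iᵀ and Φ(t) = log det(Q(t)). Then for every t ∈ ℝ^n and every i ∈ {1,…,n}, ∂Φ/∂t_i(t) = (∑_{S∈𝒜, i∈S} |S_i|·e^{∑_{ℓ∈S}|S_ℓ|t_ℓ}·Δ_S) / (∑_{S∈𝒜} e^{∑_{ℓ∈S}|S_ℓ|t_ℓ}·Δ_S), the denominator being det(Q(t)) > 0. -/

import Mathlib

open scoped BigOperators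
open Matrix

namespace MFrames

/-- The squared Frobenius norm of a real matrix. -/
noncomputable def frobSq {α β : Type*} [Fintype α] [Fintype β] (X : Matrix α β ℝ) : ℝ :=
  ∑ i, ∑ j, X i j ^ 2

variable {d n : ℕ} {m : Fin n → ℕ}

/-- Squared distance between two tuples of matrices. -/
noncomputable def dist2 (F G : ∀ i : Fin n, Matrix (Fin d) (Fin (m i)) ℝ) : ℝ :=
  ∑ i, frobSq (F i - G i)

/-- The frame operator `∑ Xᵢ Xᵢᵀ`. -/
noncomputable def frameOp (F : ∀ i : Fin n, Matrix (Fin d) (Fin (m i)) ℝ) :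
    Matrix (Fin d) (Fin d) ℝ :=
  ∑ i, F i * (F i)ᵀ

/-- `F` is a matrix frame: `∑ Xᵢ Xᵢᵀ` is positive definite. -/
def IsMatrixFrame (F : ∀ i : Fin n, Matrix (Fin d) (Fin (m i)) ℝ) : Prop :=
  (frameOp F).PosDef

/-- `F` is an ε-nearly equal-norm Parseval matrix frame. -/
def NearlyENParseval (ε : ℝ) (F : ∀ i : Fin n, Matrix (Fin d) (Fin (m i)) ℝ) : Prop :=
  (frameOp F - (1 - ε) • (1 : Matrix (Fin d) (Fin d) ℝ)).PosSemidef ∧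
  ((1 + ε) • (1 : Matrix (Fin d) (Fin d) ℝ) - frameOp F).PosSemidef ∧
  ∀ i, (1 - ε) * ((d : ℝ) / n) ≤ frobSq (F i) ∧ frobSq (F i) ≤ (1 + ε) * ((d : ℝ) / n)

/-- `F` is an equal-norm Parseval matrix frame. -/
def EqualNormParseval (F : ∀ i : Fin n, Matrix (Fin d) (Fin (m i)) ℝ) : Prop :=
  frameOp F = 1 ∧ ∀ i, frobSq (F i) = (d : ℝ) / n

/-- The columns of the concatenated matrix `[X₁ | … | Xₙ]`. -/
def col (F : ∀ i : Fin n, Matrix (Fin d) (Fin (m i)) ℝ) (p : (i : Fin n) × Fin (m i)) :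
    Fin d → ℝ :=
  fun r => F p.1 r p.2

/-- `F` is generic: `n > d` and any `d` of the columns of `[X₁ | … | Xₙ]` are linearly
independent (hence a basis of `ℝ^d`). -/
def Generic (F : ∀ i : Fin n, Matrix (Fin d) (Fin (m i)) ℝ) : Prop :=
  d < n ∧ ∀ S : Finset ((i : Fin n) × Fin (m i)), S.card = d →
    LinearIndependent ℝ (fun p : S => col F (p : (i : Fin n) × Fin (m i)))

/-- Column span of a matrix. -/
def colSpan {k : ℕ} (X : Matrix (Fin d) (Fin k) ℝ) : Submodule ℝ (Fin d → ℝ) :=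
  Submodule.span ℝ (Set.range Xᵀ)

/-- The orbit polytope `K_F` of a tuple of matrices. -/
def orbitPolytope (F : ∀ i : Fin n, Matrix (Fin d) (Fin (m i)) ℝ) : Set (Fin n → ℝ) :=
  {c | (∀ i, 0 ≤ c i) ∧ (∑ i, c i = d) ∧
    ∀ I : Finset (Fin n),
      ∑ i ∈ I, c i ≤ (Module.finrank ℝ ↥(⨆ i ∈ I, colSpan (F i)) : ℝ)}

/-- `Φ_F(t) = log det (∑ e^{tᵢ} Xᵢ Xᵢᵀ)`. -/
noncomputable def Phi (F : ∀ i : Fin n, Matrix (Fin d) (Fin (m i)) ℝ) (t : Fin n → ℝ) : ℝ :=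
  Real.log (∑ i, Real.exp (t i) • (F i * (F i)ᵀ)).det

/-- The objective function `Φ_F(t) - ⟨t, c⟩` whose infimum over `t` is `f_F(c)`. -/
noncomputable def obj (F : ∀ i : Fin n, Matrix (Fin d) (Fin (m i)) ℝ)
    (c : Fin n → ℝ) (t : Fin n → ℝ) : ℝ :=
  Phi F t - ∑ i, t i * c i

/-- `Δ_S` for `S ∈ 𝒜`, where `S` is encoded as a function `σ` assigning to each `i` a subset
`σ i ⊆ {1,…,dᵢ}` of the columns of `Xᵢ` (with `i ∈ S` iff `σ i ≠ ∅`). -/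
noncomputable def Delta (F : ∀ i : Fin n, Matrix (Fin d) (Fin (m i)) ℝ)
    (σ : ∀ i : Fin n, Finset (Fin (m i))) : ℝ :=
  (∑ i, ∑ k ∈ σ i, Matrix.of (fun r s : Fin d => F i r k * F i s k)).det

/-- The index set `𝒜`: collections of subsets of columns with `d` columns in total. -/
def indexA (d : ℕ) (m : Fin n → ℕ) : Finset (∀ i : Fin n, Finset (Fin (m i))) :=
  Finset.univ.filter fun σ => (∑ i, (σ i).card) = d

/-- Membership in the semialgebraic set `𝕍(F, c)`.  (Summing `(σ i).card • ⋯` over all of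
`𝒜` is the same as summing `|Sᵢ| • ⋯` over those `S ∈ 𝒜` with `i ∈ S`.) -/
noncomputable def inVariety (F : ∀ i : Fin n, Matrix (Fin d) (Fin (m i)) ℝ)
    (c ξ : Fin n → ℝ) : Prop :=
  (∀ i, 0 < ξ i) ∧ ∀ i,
    (∑ σ ∈ indexA d m, ((σ i).card : ℝ) * (∏ l, ξ l ^ (σ l).card) * Delta F σ)
      = c i * ∑ σ ∈ indexA d m, (∏ l, ξ l ^ (σ l).card) * Delta F σ

/-- `A` transforms `(F, c)` into a radial isotropic frame. -/
noncomputable def TransformsToRIF (F : ∀ i : Fin n, Matrix (Fin d) (Fin (m i)) ℝ)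
    (c : Fin n → ℝ) (A : Matrix (Fin d) (Fin d) ℝ) : Prop :=
  ∑ i, (c i / frobSq (A * F i)) • ((A * F i) * (A * F i)ᵀ) = 1

/-- Columns of `X` all orthogonal to the subspace `T`, i.e. `Col(X) ⊆ T^⊥`. -/
def colsPerp {k : ℕ} (X : Matrix (Fin d) (Fin k) ℝ) (T : Submodule ℝ (Fin d → ℝ)) : Prop :=
  ∀ x ∈ T, Xᵀ.mulVec x = 0

end MFrames

namespace MFrames

theorem det_expansion {d n : ℕ} {m : Fin n → ℕ}
    (F : ∀ i : Fin n, Matrix (Fin d) (Fin (m i)) ℝ) (c : Fin n → ℝ) :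
    (∑ i, c i • (F i * (F i)ᵀ)).det
      = ∑ σ ∈ indexA d m, (∏ l, c l ^ (σ l).card) * Delta F σ := by
  classical
  set u : ((i : Fin n) × Fin (m i)) → Fin d → ℝ := fun p r => F p.1 r p.2 with hu
  set E : (Fin d → (i : Fin n) × Fin (m i)) → ℝ :=
    fun f => (∏ r, u (f r) r) * (Matrix.of fun r s => u (f r) s).det with hE
  -- expansion by multilinearity
  have expand : ∀ b : ((i : Fin n) × Fin (m i)) → ℝ,
      (Matrix.of fun r s => ∑ p : (i : Fin n) × Fin (m i), b p * (u p r * u p s)).det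
      = ∑ f : Fin d → (i : Fin n) × Fin (m i), (∏ r, b (f r)) * E f := by
    intro b
    have h1 : (Matrix.of fun r s => ∑ p : (i : Fin n) × Fin (m i), b p * (u p r * u p s))
        = fun r => ∑ p : (i : Fin n) × Fin (m i), (b p * u p r) • u p := by
      ext r s
      simp [Finset.sum_apply, smul_eq_mul, mul_assoc]
    have h2 := Matrix.detRowAlternating.toMultilinearMap.map_sum
      (fun (r : Fin d) (p : (i : Fin n) × Fin (m i)) => (b p * u p r) • u p)
    rw [show (Matrix.of fun r s => ∑ p : (i : Fin n) × Fin (m i), b p * (u p r * u p s)).det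
        = Matrix.detRowAlternating (fun r => ∑ p : (i : Fin n) × Fin (m i), (b p * u p r) • u p)
      from congrArg _ h1]
    refine Eq.trans h2 ?_
    refine Finset.sum_congr rfl fun f _ => ?_
    have h3 := Matrix.detRowAlternating.toMultilinearMap.map_smul_univ
      (fun r => b (f r) * u (f r) r) (fun r => u (f r))
    refine Eq.trans h3 ?_
    show (∏ r, b (f r) * u (f r) r) • (Matrix.of fun r s => u (f r) s).det = _
    simp only [smul_eq_mul, Finset.prod_mul_distrib, hE]
    ring
  have Ezero : ∀ f : Fin d → (i : Fin n) × Fin (m i), ¬ Function.Injective f → E f = 0 := by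
    intro f hf
    rw [Function.not_injective_iff] at hf
    obtain ⟨r, r', hrr, hne⟩ := hf
    have : (Matrix.of fun r s => u (f r) s).det = 0 :=
      Matrix.det_zero_of_row_eq hne (by funext s; simp [hrr])
    simp [hE, this]
  -- step 3: determinant of a sub-Gram matrix
  have step3 : ∀ T : Finset ((i : Fin n) × Fin (m i)), T.card = d →
      (Matrix.of fun r s => ∑ p ∈ T, u p r * u p s).det
        = ∑ f ∈ Finset.univ.filter
            (fun f : Fin d → (i : Fin n) × Fin (m i) =>
              Function.Injective f ∧ Finset.image f Finset.univ = T),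
            E f := by
    intro T hT
    have hb : (Matrix.of fun r s => ∑ p ∈ T, u p r * u p s)
        = (Matrix.of fun r s => ∑ p : (i : Fin n) × Fin (m i),
            (if p ∈ T then (1:ℝ) else 0) * (u p r * u p s)) := by
      ext r s
      simp [ite_mul, Finset.sum_ite_mem]
    rw [hb, expand, Finset.sum_filter]
    refine Finset.sum_congr rfl fun f _ => ?_
    by_cases hinj : Function.Injective f
    · by_cases hall : ∀ r, f r ∈ T
      · have hsub : Finset.image f Finset.univ ⊆ T := by
          intro p hp
          obtain ⟨r, _, rfl⟩ := Finset.mem_image.mp hp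
          exact hall r
        have hcard : T.card ≤ (Finset.image f Finset.univ).card := by
          rw [Finset.card_image_of_injective _ hinj, Finset.card_univ, Fintype.card_fin, hT]
        have himg : Finset.image f Finset.univ = T :=
          Finset.eq_of_subset_of_card_le hsub hcard
        have h1 : (∏ r, if f r ∈ T then (1:ℝ) else 0) = 1 :=
          Finset.prod_eq_one fun r _ => if_pos (hall r)
        rw [h1, one_mul, if_pos ⟨hinj, himg⟩]
      · push_neg at hall
        obtain ⟨r, hr⟩ := hall
        have h1 : (∏ r, if f r ∈ T then (1:ℝ) else 0) = 0 :=
          Finset.prod_eq_zero (Finset.mem_univ r) (if_neg hr)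
        have h2 : ¬ (Function.Injective f ∧ Finset.image f Finset.univ = T) := by
          rintro ⟨-, himg⟩
          exact hr (himg ▸ Finset.mem_image_of_mem f (Finset.mem_univ r))
        rw [h1, zero_mul, if_neg h2]
    · rw [Ezero f hinj, mul_zero, if_neg (fun h => hinj h.1)]
  -- main computation
  have hM : (∑ i, c i • (F i * (F i)ᵀ))
      = (Matrix.of fun r s => ∑ p : (i : Fin n) × Fin (m i), c p.1 * (u p r * u p s)) := by
    ext r s
    simp only [Matrix.sum_apply, Matrix.smul_apply, smul_eq_mul, Matrix.of_apply]
    rw [← Finset.univ_sigma_univ, Finset.sum_sigma]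
    refine Finset.sum_congr rfl fun i _ => ?_
    simp [Matrix.mul_apply, Finset.mul_sum, hu]
  rw [hM, expand]
  -- drop non-injective terms
  rw [← Finset.sum_filter_add_sum_filter_not Finset.univ
      (fun f : Fin d → (i : Fin n) × Fin (m i) => Function.Injective f)]
  have hz : ∑ f ∈ Finset.univ.filter
      (fun f : Fin d → (i : Fin n) × Fin (m i) => ¬ Function.Injective f),
      (∏ r, c (f r).1) * E f = 0 := by
    refine Finset.sum_eq_zero fun f hf => ?_
    rw [Ezero f (Finset.mem_filter.mp hf).2, mul_zero]
  rw [hz, add_zero]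
  -- group by image
  have hmaps : ∀ f ∈ Finset.univ.filter
      (fun f : Fin d → (i : Fin n) × Fin (m i) => Function.Injective f),
      Finset.image f Finset.univ
        ∈ Finset.powersetCard d (Finset.univ : Finset ((i : Fin n) × Fin (m i))) := by
    intro f hf
    rw [Finset.mem_powersetCard]
    exact ⟨Finset.subset_univ _, by
      rw [Finset.card_image_of_injective _ (Finset.mem_filter.mp hf).2, Finset.card_univ,
        Fintype.card_fin]⟩
  rw [← Finset.sum_fiberwise_of_maps_to hmaps]
  have hfiber : ∀ T ∈ Finset.powersetCard d (Finset.univ : Finset ((i : Fin n) × Fin (m i))),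
      (∑ f ∈ (Finset.univ.filter
          (fun f : Fin d → (i : Fin n) × Fin (m i) => Function.Injective f)).filter
          (fun f => Finset.image f Finset.univ = T), (∏ r, c (f r).1) * E f)
        = (∏ p ∈ T, c p.1) * (Matrix.of fun r s => ∑ p ∈ T, u p r * u p s).det := by
    intro T hT
    have hTcard : T.card = d := (Finset.mem_powersetCard.mp hT).2
    rw [step3 T hTcard, Finset.filter_filter, Finset.mul_sum]
    refine Finset.sum_congr rfl fun f hf => ?_
    obtain ⟨-, hinj, himg⟩ := Finset.mem_filter.mp hf
    have : (∏ p ∈ T, c p.1) = ∏ r, c (f r).1 := by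
      rw [← himg, Finset.prod_image (fun x _ y _ h => hinj h)]
    rw [this]
  rw [Finset.sum_congr rfl hfiber]
  -- reindex by σ
  refine Finset.sum_nbij'
    (fun T => fun l => Finset.univ.filter (fun k => (⟨l, k⟩ : (i : Fin n) × Fin (m i)) ∈ T))
    (fun σ => Finset.univ.sigma σ) ?_ ?_ ?_ ?_ ?_
  · intro T hT
    have hTcard : T.card = d := (Finset.mem_powersetCard.mp hT).2
    have hTs : Finset.univ.sigma
        (fun l => Finset.univ.filter
          (fun k => (⟨l, k⟩ : (i : Fin n) × Fin (m i)) ∈ T)) = T := by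
      ext ⟨l, k⟩
      simp [Finset.mem_sigma]
    rw [indexA, Finset.mem_filter]
    refine ⟨Finset.mem_univ _, ?_⟩
    rw [← Finset.card_sigma, hTs, hTcard]
  · intro σ hσ
    rw [indexA, Finset.mem_filter] at hσ
    rw [Finset.mem_powersetCard]
    exact ⟨Finset.subset_univ _, by rw [Finset.card_sigma]; exact hσ.2⟩
  · intro T hT
    ext ⟨l, k⟩
    simp [Finset.mem_sigma]
  · intro σ hσ
    funext l
    ext k
    simp [Finset.mem_sigma]
  · intro T hT
    have hs : T = Finset.univ.sigma
        (fun l => Finset.univ.filter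
          (fun k => (⟨l, k⟩ : (i : Fin n) × Fin (m i)) ∈ T)) := by
      ext ⟨l, k⟩
      simp [Finset.mem_sigma]
    congr 1
    · conv_lhs => rw [hs]
      rw [Finset.prod_sigma]
      refine Finset.prod_congr rfl fun l _ => ?_
      calc (∏ k ∈ Finset.univ.filter
              (fun k => (⟨l, k⟩ : (i : Fin n) × Fin (m i)) ∈ T), c (⟨l, k⟩ : (i : Fin n) × Fin (m i)).1)
          = ∏ _k ∈ Finset.univ.filter
              (fun k => (⟨l, k⟩ : (i : Fin n) × Fin (m i)) ∈ T), c l :=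
            Finset.prod_congr rfl fun k _ => rfl
        _ = c l ^ (Finset.univ.filter
              (fun k => (⟨l, k⟩ : (i : Fin n) × Fin (m i)) ∈ T)).card := Finset.prod_const _
    · rw [Delta]
      congr 1
      ext r s
      simp only [Matrix.of_apply, Matrix.sum_apply]
      conv_lhs => rw [hs]
      rw [Finset.sum_sigma]


theorem posDef_Q {d n : ℕ} {m : Fin n → ℕ}
    (F : ∀ i : Fin n, Matrix (Fin d) (Fin (m i)) ℝ) (hF : IsMatrixFrame F)
    (c : Fin n → ℝ) (hc : ∀ i, 0 < c i) :
    (∑ i, c i • (F i * (F i)ᵀ)).PosDef := by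
  have key : ∀ (i : Fin n) (x : Fin d → ℝ),
      x ⬝ᵥ (F i * (F i)ᵀ) *ᵥ x = ((F i)ᵀ *ᵥ x) ⬝ᵥ ((F i)ᵀ *ᵥ x) := by
    intro i x
    rw [← Matrix.mulVec_mulVec, Matrix.dotProduct_mulVec, ← Matrix.mulVec_transpose]
  have dpn : ∀ {N : ℕ} (v : Fin N → ℝ), 0 ≤ v ⬝ᵥ v :=
    fun v => Finset.sum_nonneg fun k _ => mul_self_nonneg _
  have sum_mulVec : ∀ (A : Fin n → Matrix (Fin d) (Fin d) ℝ) (x : Fin d → ℝ),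
      (∑ i, A i) *ᵥ x = ∑ i, A i *ᵥ x :=
    fun A x => map_sum (Matrix.mulVec.addMonoidHomLeft x) A Finset.univ
  have dps : ∀ (x : Fin d → ℝ) (v : Fin n → Fin d → ℝ), x ⬝ᵥ (∑ i, v i) = ∑ i, x ⬝ᵥ v i := by
    intro x v
    simp only [dotProduct, Finset.sum_apply, Finset.mul_sum]
    exact Finset.sum_comm
  refine Matrix.PosDef.of_dotProduct_mulVec_pos ?_ ?_
  · show _ᴴ = _
    ext r s
    simp [Matrix.sum_apply, Matrix.mul_apply, Finset.mul_sum, mul_comm]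
  · intro x hx
    have hx' : 0 < x ⬝ᵥ (frameOp F) *ᵥ x := by
      have := hF.dotProduct_mulVec_pos hx
      simpa using this
    rw [frameOp, sum_mulVec, dps] at hx'
    have hex : ∃ i : Fin n, (0:ℝ) < ((F i)ᵀ *ᵥ x) ⬝ᵥ ((F i)ᵀ *ᵥ x) := by
      by_contra h
      push_neg at h
      have : (∑ i, x ⬝ᵥ (F i * (F i)ᵀ) *ᵥ x) ≤ 0 := by
        refine Finset.sum_nonpos fun i _ => ?_
        rw [key]
        exact h i
      linarith
    obtain ⟨j, hj⟩ := hex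
    have : star x ⬝ᵥ (∑ i, c i • (F i * (F i)ᵀ)) *ᵥ x
        = ∑ i, c i * (((F i)ᵀ *ᵥ x) ⬝ᵥ ((F i)ᵀ *ᵥ x)) := by
      rw [star_trivial, sum_mulVec, dps]
      refine Finset.sum_congr rfl fun i _ => ?_
      rw [Matrix.smul_mulVec, dotProduct_smul, smul_eq_mul, key]
    rw [this]
    refine Finset.sum_pos' (fun i _ => mul_nonneg (hc i).le (dpn ((F i)ᵀ *ᵥ x))) ⟨j, Finset.mem_univ j, ?_⟩
    exact mul_pos (hc j) hj



theorem hasDerivAt_helper (K c : ℝ) (D : ℝ) :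
    HasDerivAt (fun s : ℝ => Real.exp (K + c * s) * D) (c * Real.exp K * D) 0 := by
  have h1 : HasDerivAt (fun s : ℝ => K + c * s) c 0 := by
    simpa using ((hasDerivAt_id (0 : ℝ)).const_mul c).const_add K
  have h2 := h1.exp.mul_const D
  rw [mul_zero, add_zero] at h2
  rw [show c * Real.exp K * D = Real.exp K * c * D by ring]
  exact h2

/-- **Lemma (partial derivatives of `Φ`, combinatorial form).**  For a matrix frame `F`,
`∂Φ/∂tᵢ(t) = (∑_{S∈𝒜, i∈S} |Sᵢ| e^{∑_{ℓ∈S}|S_ℓ|t_ℓ} Δ_S) / (∑_{S∈𝒜} e^{∑_{ℓ∈S}|S_ℓ|t_ℓ} Δ_S)`,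
the denominator being `det Q(t) > 0`. -/
theorem partial_deriv_Phi_formula {d n : ℕ} {m : Fin n → ℕ}
    (F : ∀ i : Fin n, Matrix (Fin d) (Fin (m i)) ℝ) (hF : IsMatrixFrame F)
    (t : Fin n → ℝ) (i : Fin n) :
    HasDerivAt (fun s : ℝ => Phi F (t + s • (Pi.single i 1 : Fin n → ℝ)))
      ((∑ σ ∈ indexA d m, ((σ i).card : ℝ) *
          Real.exp (∑ l, ((σ l).card : ℝ) * t l) * Delta F σ) /
        (∑ σ ∈ indexA d m, Real.exp (∑ l, ((σ l).card : ℝ) * t l) * Delta F σ)) 0 ∧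
    (∑ σ ∈ indexA d m, Real.exp (∑ l, ((σ l).card : ℝ) * t l) * Delta F σ)
      = (∑ j, Real.exp (t j) • (F j * (F j)ᵀ)).det ∧
    0 < ∑ σ ∈ indexA d m, Real.exp (∑ l, ((σ l).card : ℝ) * t l) * Delta F σ := by
  classical
  have hdet : ∀ t' : Fin n → ℝ,
      (∑ j, Real.exp (t' j) • (F j * (F j)ᵀ)).det
        = ∑ σ ∈ indexA d m, Real.exp (∑ l, ((σ l).card : ℝ) * t' l) * Delta F σ := by
    intro t'
    rw [det_expansion F (fun j => Real.exp (t' j))]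
    refine Finset.sum_congr rfl fun σ _ => ?_
    congr 1
    rw [Real.exp_sum]
    refine Finset.prod_congr rfl fun l _ => ?_
    rw [← Real.exp_nat_mul]
  have hpos : ∀ t' : Fin n → ℝ, 0 < (∑ j, Real.exp (t' j) • (F j * (F j)ᵀ)).det :=
    fun t' => (posDef_Q F hF _ (fun j => Real.exp_pos _)).det_pos
  have hd0 : (∑ σ ∈ indexA d m, Real.exp (∑ l, ((σ l).card : ℝ) * t l) * Delta F σ)
      = (∑ j, Real.exp (t j) • (F j * (F j)ᵀ)).det := (hdet t).symm
  have hposs : 0 < ∑ σ ∈ indexA d m, Real.exp (∑ l, ((σ l).card : ℝ) * t l) * Delta F σ := by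
    rw [hd0]; exact hpos t
  refine ⟨?_, hd0, hposs⟩
  have hfun : ∀ s : ℝ, Phi F (t + s • (Pi.single i 1 : Fin n → ℝ))
      = Real.log (∑ σ ∈ indexA d m,
          Real.exp ((∑ l, ((σ l).card : ℝ) * t l) + ((σ i).card : ℝ) * s) * Delta F σ) := by
    intro s
    rw [Phi, hdet]
    congr 1
    refine Finset.sum_congr rfl fun σ _ => ?_
    congr 2
    have h : ∀ l, ((σ l).card : ℝ) * (t + s • (Pi.single i 1 : Fin n → ℝ)) l
        = ((σ l).card : ℝ) * t l + (if l = i then ((σ l).card : ℝ) * s else 0) := by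
      intro l
      rcases eq_or_ne l i with rfl | hl
      · simp only [Pi.add_apply, Pi.smul_apply, Pi.single_eq_same, smul_eq_mul, mul_one,
          if_pos rfl]
        simp only [if_true]
        ring
      · simp [Pi.single_apply, hl]
    rw [Finset.sum_congr rfl (fun l _ => h l), Finset.sum_add_distrib,
      Finset.sum_ite_eq' Finset.univ i]
    simp
  have hg : HasDerivAt (fun s : ℝ => ∑ σ ∈ indexA d m,
      Real.exp ((∑ l, ((σ l).card : ℝ) * t l) + ((σ i).card : ℝ) * s) * Delta F σ)
      (∑ σ ∈ indexA d m,
        ((σ i).card : ℝ) * Real.exp (∑ l, ((σ l).card : ℝ) * t l) * Delta F σ) 0 :=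
    HasDerivAt.fun_sum fun σ _ => hasDerivAt_helper _ _ _
  have hg0 : (∑ σ ∈ indexA d m,
      Real.exp ((∑ l, ((σ l).card : ℝ) * t l) + ((σ i).card : ℝ) * 0) * Delta F σ)
      = ∑ σ ∈ indexA d m, Real.exp (∑ l, ((σ l).card : ℝ) * t l) * Delta F σ := by
    simp
  have hne : (∑ σ ∈ indexA d m,
      Real.exp ((∑ l, ((σ l).card : ℝ) * t l) + ((σ i).card : ℝ) * 0) * Delta F σ) ≠ 0 := by
    rw [hg0]; exact hposs.ne'
  have hlog := hg.log hne
  have hfeq : (fun s : ℝ => Phi F (t + s • (Pi.single i 1 : Fin n → ℝ)))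
      = fun s : ℝ => Real.log (∑ σ ∈ indexA d m,
          Real.exp ((∑ l, ((σ l).card : ℝ) * t l) + ((σ i).card : ℝ) * s) * Delta F σ) :=
    funext hfun
  rw [hfeq, ← hg0]
  exact hlog


end MFrames
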